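/- Let V be a vector space with basis S over a field of characteristic 0. Let d be the degree-1 derivation of T(V) with d(s)=s⊗s (Koszul signs), and let wₙ: V^{⊗n} → Lₙ(V) be the left-normed bracketing map. Then there exists a linear map gₙ: V^{⊗n} → V^{⊗(n+1)} such that w_{n+1} ∘ gₙ = d ∘ wₙ; i.e., the differential restricted to the image of the bracketing projector factors through w_{n+1}. -/

import Mathlib

/-- Auxiliary function computing a left-normed graded commutator: `glnbAux a p l`
brackets the (degree `p`) element `a` successively with the degree-one elements of
`l`, using the graded bracket `[x,b] = x*b − (−1)^{|x|} b*x`. -/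
def glnbAux {A : Type*} [Ring A] : A → ℕ → List A → A
  | a, _, [] => a
  | a, p, b :: l => glnbAux (a * b - ((-1 : ℤ) ^ p) • (b * a)) (p + 1) l

/-- The left-normed graded commutator `[...[v₁,v₂],...,vₙ]` of `n ≥ 1` elements of
`V ⊆ T(V)`, each placed in degree one. -/
noncomputable def glnbF (k : Type*) (V : Type*) [CommRing k] [AddCommGroup V]
    [Module k V] {n : ℕ} (v : Fin (n + 1) → V) : TensorAlgebra k V :=
  glnbAux (TensorAlgebra.ι k (v 0)) 1
    (List.ofFn fun i : Fin n => TensorAlgebra.ι k (v i.succ))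

namespace Stmt15Aux
open TensorAlgebra
open Module

variable {k : Type*} [Field k] {V : Type*} [AddCommGroup V] [Module k V] {S : Type*}

/-- The algebra hom encoding the odd derivation `D` (lower-left entry) and the sign
automorphism (lower-right entry). -/
noncomputable def Phi (b : Basis S k V) :
    TensorAlgebra k V →ₐ[k] Matrix (Fin 2) (Fin 2) (TensorAlgebra k V) :=
  TensorAlgebra.lift k <| b.constr k fun s =>
    !![ι k (b s), 0; ι k (b s) * ι k (b s), -ι k (b s)]

lemma Phi_row0 (b : Basis S k V) (x : TensorAlgebra k V) :
    Phi b x 0 0 = x ∧ Phi b x 0 1 = 0 := by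
  induction x using TensorAlgebra.induction with
  | algebraMap r =>
    rw [AlgHom.commutes]
    constructor <;> simp [Matrix.algebraMap_matrix_apply]
  | ι v =>
    rw [Phi, TensorAlgebra.lift_ι_apply]
    constructor
    · have h : (Matrix.entryLinearMap k (TensorAlgebra k V) 0 0) ∘ₗ
        (b.constr k fun s =>
          !![ι k (b s), 0; ι k (b s) * ι k (b s), -ι k (b s)]) = ι k := by
        apply b.ext
        intro s
        simp [Basis.constr_basis, Matrix.entryLinearMap_apply]
      exact DFunLike.congr_fun h v
    · have h : (Matrix.entryLinearMap k (TensorAlgebra k V) 0 1) ∘ₗ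
        (b.constr k fun s =>
          !![ι k (b s), 0; ι k (b s) * ι k (b s), -ι k (b s)]) = 0 := by
        apply b.ext
        intro s
        simp [Basis.constr_basis, Matrix.entryLinearMap_apply]
      exact DFunLike.congr_fun h v
  | mul x y hx hy =>
    rw [map_mul]
    constructor <;>
      simp [Matrix.mul_apply, Fin.sum_univ_two, hx.1, hx.2, hy.1, hy.2]
  | add x y hx hy =>
    rw [map_add]
    constructor <;> simp [Matrix.add_apply, hx.1, hx.2, hy.1, hy.2]

/-- The odd derivation. -/
noncomputable def Dm (b : Basis S k V) : TensorAlgebra k V →ₗ[k] TensorAlgebra k V :=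
  Matrix.entryLinearMap k _ 1 0 ∘ₗ (Phi b).toLinearMap

/-- The sign automorphism. -/
noncomputable def sg (b : Basis S k V) : TensorAlgebra k V →ₗ[k] TensorAlgebra k V :=
  Matrix.entryLinearMap k _ 1 1 ∘ₗ (Phi b).toLinearMap

lemma Dm_apply (b : Basis S k V) (x : TensorAlgebra k V) : Dm b x = Phi b x 1 0 := rfl
lemma sg_apply (b : Basis S k V) (x : TensorAlgebra k V) : sg b x = Phi b x 1 1 := rfl

lemma Dm_mul (b : Basis S k V) (x y : TensorAlgebra k V) :
    Dm b (x * y) = Dm b x * y + sg b x * Dm b y := by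
  rw [Dm_apply, map_mul, Matrix.mul_apply, Fin.sum_univ_two, (Phi_row0 b y).1]
  rfl

lemma sg_mul (b : Basis S k V) (x y : TensorAlgebra k V) :
    sg b (x * y) = sg b x * sg b y := by
  rw [sg_apply, map_mul, Matrix.mul_apply, Fin.sum_univ_two, (Phi_row0 b y).2, mul_zero, zero_add]
  rfl

lemma Dm_one (b : Basis S k V) : Dm b 1 = 0 := by
  rw [Dm_apply, map_one, Matrix.one_apply_ne (by decide)]

lemma sg_one (b : Basis S k V) : sg b 1 = 1 := by
  rw [sg_apply, map_one, Matrix.one_apply_eq]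

lemma Dm_ι (b : Basis S k V) (s : S) :
    Dm b (ι k (b s)) = ι k (b s) * ι k (b s) := by
  rw [Dm_apply, Phi, TensorAlgebra.lift_ι_apply, Basis.constr_basis]
  simp

lemma sg_ι (b : Basis S k V) (s : S) :
    sg b (ι k (b s)) = -(ι k (b s)) := by
  rw [sg_apply, Phi, TensorAlgebra.lift_ι_apply, Basis.constr_basis]
  simp


/-- The basis monomial attached to a word in `S`. -/
noncomputable def mon (b : Basis S k V) {m : ℕ} (f : Fin m → S) : TensorAlgebra k V :=
  (List.ofFn fun i => ι k (b (f i))).prod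

lemma mon_zero (b : Basis S k V) (f : Fin 0 → S) : mon b f = 1 := by simp [mon]

lemma mon_succ (b : Basis S k V) {m : ℕ} (f : Fin (m + 1) → S) :
    mon b f = mon b (fun i => f i.castSucc) * ι k (b (f (Fin.last m))) := by
  rw [mon, mon, List.ofFn_succ', List.prod_concat]

lemma sg_mon (b : Basis S k V) {m : ℕ} (f : Fin m → S) :
    sg b (mon b f) = ((-1 : k) ^ m) • mon b f := by
  induction m with
  | zero => simp [mon_zero, sg_one]
  | succ m ih =>
    rw [mon_succ, sg_mul, ih, sg_ι, smul_mul_assoc, mul_neg, pow_succ, mul_smul, smul_neg,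
      neg_one_smul, smul_neg]

lemma Dm_mon (b : Basis S k V) {m : ℕ} (f : Fin m → S) :
    Dm b (mon b f) = ∑ j : Fin m, ((-1 : k) ^ (j : ℕ)) •
      mon b (fun i : Fin (m + 1) => f (j.predAbove i)) := by
  induction m with
  | zero => simp [mon_zero, Dm_one]
  | succ m ih =>
    have h1 : ∀ j : Fin m, mon b (fun i : Fin (m + 2) => f ((Fin.castSucc j).predAbove i)) =
        mon b (fun i : Fin (m + 1) => (fun i' => f i'.castSucc) (j.predAbove i)) *
          ι k (b (f (Fin.last m))) := by
      intro j
      rw [mon_succ]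
      congr 1
      · congr 1
        funext i
        rw [Fin.castSucc_predAbove_castSucc]
      · rw [Fin.predAbove_right_last]
    have h2 : mon b (fun i : Fin (m + 2) => f ((Fin.last m).predAbove i)) =
        mon b (fun i => f i.castSucc) * ι k (b (f (Fin.last m))) * ι k (b (f (Fin.last m))) := by
      rw [mon_succ]
      congr 1
      · rw [show (fun i : Fin (m + 1) =>
            f ((Fin.last m).predAbove i.castSucc)) = f from
            funext fun i => by rw [Fin.predAbove_last_castSucc], mon_succ]
      · rw [Fin.predAbove_right_last]
    rw [mon_succ, Dm_mul, ih, Dm_ι, sg_mon, Fin.sum_univ_castSucc]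
    rw [Finset.sum_mul]
    congr 1
    · apply Finset.sum_congr rfl
      intro j _
      rw [smul_mul_assoc, h1 j, Fin.coe_castSucc]
    · rw [h2, Fin.val_last, smul_mul_assoc, mul_assoc]

lemma zsmul_to_ksmul (p : ℕ) (y : TensorAlgebra k V) :
    ((-1 : ℤ) ^ p) • y = ((-1 : k) ^ p) • y := by
  rw [← Int.cast_smul_eq_zsmul k]
  push_cast
  ring_nf

lemma glnbAux_append {A : Type*} [Ring A] (l : List A) (a x : A) (p : ℕ) :
    glnbAux a p (l ++ [x]) =
      glnbAux a p l * x - ((-1 : ℤ) ^ (p + l.length)) • (x * glnbAux a p l) := by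
  induction l generalizing a p with
  | nil => simp [glnbAux]
  | cons c l ih =>
    rw [List.cons_append, glnbAux, glnbAux, ih,
      show p + 1 + l.length = p + (c :: l).length by simp only [List.length_cons]; omega]

lemma glnbF_succ {n : ℕ} (v : Fin (n + 2) → V) :
    glnbF k V v = glnbF k V (fun i => v i.castSucc) * ι k (v (Fin.last (n + 1)))
      - ((-1 : k) ^ (n + 1)) •
        (ι k (v (Fin.last (n + 1))) * glnbF k V (fun i => v i.castSucc)) := by
  rw [← zsmul_to_ksmul, glnbF, List.ofFn_succ', List.concat_eq_append, glnbAux_append]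
  congr 2 <;>
  · simp [glnbF, Fin.succ_castSucc, Fin.succ_last, Fin.castSucc_zero, List.length_ofFn,
      add_comm, -Fin.castSucc_succ]

lemma glnbF_one (v : Fin 1 → V) : glnbF k V v = ι k (v 0) := by
  simp [glnbF, glnbAux]

lemma sg_glnbF {m : ℕ} (b : Basis S k V) (f : Fin (m + 1) → S) :
    sg b (glnbF k V (fun i => b (f i))) =
      ((-1 : k) ^ (m + 1)) • glnbF k V (fun i => b (f i)) := by
  induction m with
  | zero => rw [glnbF_one, sg_ι, pow_one, neg_one_smul]
  | succ m ih =>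
    rw [glnbF_succ, map_sub, LinearMap.map_smul, sg_mul, sg_mul, sg_ι, ih (fun i => f i.castSucc)]
    rcases Nat.even_or_odd (m + 1) with hp | hp
    · simp only [hp.neg_one_pow, hp.add_one.neg_one_pow, one_smul, neg_one_smul]
      simp only [smul_mul_assoc, mul_smul_comm, mul_neg, neg_mul, smul_neg, neg_neg,
        one_smul, neg_one_smul]
      try abel
    · simp only [hp.neg_one_pow, hp.add_one.neg_one_pow, one_smul, neg_one_smul]
      simp only [smul_mul_assoc, mul_smul_comm, mul_neg, neg_mul, smul_neg, neg_neg,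
        one_smul, neg_one_smul]
      try abel

/-- Coefficients in the expression of `D` of a left-normed bracket as a combination
of left-normed brackets with one letter doubled. -/
noncomputable def cc (k : Type*) [Field k] {m : ℕ} (j : Fin m) : k :=
  if (j : ℕ) = 0 then (2 : k)⁻¹ else (-1 : k) ^ (j : ℕ)

lemma cc_castSucc {m : ℕ} (j : Fin m) : cc k (Fin.castSucc j) = cc k j := by
  simp [cc]

lemma cc_last {m : ℕ} : cc k (Fin.last (m + 1)) = (-1 : k) ^ (m + 1) := by
  simp [cc]

lemma key [CharZero k] (b : Basis S k V) : ∀ {m : ℕ} (f : Fin (m + 1) → S),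
    Dm b (glnbF k V (fun i => b (f i))) =
      ∑ j : Fin (m + 1), cc k j • glnbF k V (fun i => b (f (j.predAbove i))) := by
  intro m
  induction m with
  | zero =>
    intro f
    rw [glnbF_one, Dm_ι, Fin.sum_univ_one]
    have h0 : ∀ i : Fin 2, (0 : Fin 1).predAbove i = 0 := fun i => Subsingleton.elim _ _
    simp only [h0]
    rw [glnbF_succ]
    simp only [glnbF_one]
    have : cc k (0 : Fin 1) = (2 : k)⁻¹ := by simp [cc]
    rw [this]
    match_scalars
    norm_num
  | succ m ih =>
    intro f
    set x : TensorAlgebra k V := ι k (b (f (Fin.last (m + 1)))) with hxdef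
    set X : TensorAlgebra k V := glnbF k V (fun i : Fin (m + 1) => b (f i.castSucc)) with hXdef
    have h1 : ∀ j : Fin (m + 1),
        glnbF k V (fun i : Fin (m + 3) => b (f ((Fin.castSucc j).predAbove i))) =
          (glnbF k V fun i : Fin (m + 2) => b (f ((j.predAbove i).castSucc))) * x
            - ((-1 : k) ^ (m + 2)) •
              (x * glnbF k V fun i : Fin (m + 2) => b (f ((j.predAbove i).castSucc))) := by
      intro j
      rw [glnbF_succ]
      rw [show (fun i : Fin (m + 2) => b (f ((Fin.castSucc j).predAbove i.castSucc))) =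
          (fun i : Fin (m + 2) => b (f ((j.predAbove i).castSucc))) from
        funext fun i => by rw [Fin.castSucc_predAbove_castSucc]]
      rw [Fin.predAbove_right_last]
    have h2 : glnbF k V (fun i : Fin (m + 3) => b (f ((Fin.last (m + 1)).predAbove i))) =
        X * (x * x) - (x * x) * X := by
      rw [glnbF_succ]
      rw [show (fun i : Fin (m + 2) => b (f ((Fin.last (m + 1)).predAbove i.castSucc))) =
          (fun i : Fin (m + 2) => b (f i)) from
        funext fun i => by rw [Fin.predAbove_last_castSucc]]
      rw [Fin.predAbove_right_last, glnbF_succ, ← hxdef, ← hXdef]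
      rcases Nat.even_or_odd (m + 1) with hp | hp
      · have e1 : ((-1 : k)) ^ (m + 1) = 1 := hp.neg_one_pow
        have e2 : ((-1 : k)) ^ (m + 1 + 1) = -1 :=
          Odd.neg_one_pow (by obtain ⟨t, ht⟩ := hp; exact ⟨t, by omega⟩)
        simp only [e1, e2, one_smul, neg_one_smul, sub_mul, mul_sub, add_mul, mul_add,
          smul_sub, smul_add, smul_neg, neg_mul, mul_neg, neg_neg, sub_neg_eq_add,
          mul_assoc, smul_mul_assoc, mul_smul_comm, sub_eq_add_neg, neg_add]
        try abel
      · have e1 : ((-1 : k)) ^ (m + 1) = -1 := hp.neg_one_pow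
        have e2 : ((-1 : k)) ^ (m + 1 + 1) = 1 :=
          Even.neg_one_pow (by obtain ⟨t, ht⟩ := hp; exact ⟨t + 1, by omega⟩)
        simp only [e1, e2, one_smul, neg_one_smul, sub_mul, mul_sub, add_mul, mul_add,
          smul_sub, smul_add, smul_neg, neg_mul, mul_neg, neg_neg, sub_neg_eq_add,
          mul_assoc, smul_mul_assoc, mul_smul_comm, sub_eq_add_neg, neg_add]
        try abel
    -- expand the left-hand side
    rw [glnbF_succ, map_sub, LinearMap.map_smul, Dm_mul, Dm_mul, Dm_ι,
      sg_glnbF b (fun i => f i.castSucc), sg_ι, ← hxdef, ← hXdef,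
      ih (fun i => f i.castSucc)]
    set e : k := (-1 : k) ^ (m + 1) with hedef
    have he2 : ((-1 : k)) ^ (m + 2) = -e := by rw [hedef, pow_succ]; ring
    -- expand the right-hand side
    conv_rhs => rw [Fin.sum_univ_castSucc]
    rw [cc_last, h2, ← hedef]
    have hS : ∑ j : Fin (m + 1), cc k j.castSucc •
          glnbF k V (fun i : Fin (m + 3) => b (f ((Fin.castSucc j).predAbove i))) =
        ∑ j : Fin (m + 1),
          (cc k j • ((glnbF k V fun i : Fin (m + 2) => b (f ((j.predAbove i).castSucc))) * x) +
            (e * cc k j) •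
              (x * glnbF k V fun i : Fin (m + 2) => b (f ((j.predAbove i).castSucc)))) :=
      Finset.sum_congr rfl fun j _ => by rw [cc_castSucc, h1 j, he2]; module
    rw [hS, Finset.sum_add_distrib]
    simp only [mul_smul]
    rw [← Finset.smul_sum]
    simp only [Finset.sum_mul, smul_mul_assoc, neg_mul, Finset.mul_sum, mul_smul_comm,
      smul_add, smul_neg, smul_sub, Finset.sum_neg_distrib]
    abel

lemma basisFreeMonoid_apply {R : Type*} [CommRing R] {X : Type*} (l : FreeMonoid X) :
    FreeAlgebra.basisFreeMonoid R X l = (l.toList.map (FreeAlgebra.ι R)).prod := by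
  have hb : ∀ t : FreeMonoid X, FreeAlgebra.basisFreeMonoid R X t =
      FreeAlgebra.equivMonoidAlgebraFreeMonoid.symm (MonoidAlgebra.single t 1) := by
    intro t
    rw [FreeAlgebra.basisFreeMonoid, Basis.map_apply]
    have h : Finsupp.basisSingleOne (ι := FreeMonoid X) (R := R) t =
        (MonoidAlgebra.single t 1).coeff := by
      simp [Finsupp.coe_basisSingleOne]
    rw [h]
    rfl
  induction l using FreeMonoid.recOn with
  | one =>
    rw [hb]
    have h1 : MonoidAlgebra.single (1 : FreeMonoid X) (1 : R) = 1 :=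
      MonoidAlgebra.one_def.symm
    rw [h1, map_one]
    simp [FreeMonoid.toList_one]
  | of_mul s t ihl =>
    have hsingle : MonoidAlgebra.single (FreeMonoid.of s * t) (1 : R) =
        MonoidAlgebra.single (FreeMonoid.of s) (1 : R) *
          MonoidAlgebra.single t (1 : R) := by
      have h := MonoidAlgebra.single_mul_single (R := R) (M := FreeMonoid X)
        (m₁ := FreeMonoid.of s) (m₂ := t) (r₁ := 1) (r₂ := 1)
      rw [one_mul] at h
      exact h.symm
    rw [hb, hsingle, map_mul, ← hb t, ihl]
    rw [FreeMonoid.toList_of_mul, List.map_cons, List.prod_cons]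
    congr 1
    have h2 : FreeAlgebra.equivMonoidAlgebraFreeMonoid (R := R) (X := X) (FreeAlgebra.ι R s) =
        MonoidAlgebra.single (FreeMonoid.of s) 1 := by
      rw [FreeAlgebra.equivMonoidAlgebraFreeMonoid]
      simp [MonoidAlgebra.of_apply]
    rw [← h2, AlgEquiv.symm_apply_apply]

lemma bA_apply (b : Basis S k V) (l : FreeMonoid S) :
    b.tensorAlgebra l = (l.toList.map (fun s => ι k (b s))).prod := by
  rw [Basis.tensorAlgebra, Basis.map_apply, AlgEquiv.toLinearEquiv_apply,
    basisFreeMonoid_apply]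
  induction l.toList with
  | nil => simp
  | cons s t ih => simp only [List.map_cons, List.prod_cons, map_mul, ih,
      TensorAlgebra.equivFreeAlgebra_symm_ι]

lemma mon_eq_tensorAlgebraBasis (b : Basis S k V) {m : ℕ} (f : Fin m → S) :
    mon b f = b.tensorAlgebra (FreeMonoid.ofList (List.ofFn f)) := by
  rw [bA_apply, FreeMonoid.toList_ofList, List.map_ofFn]
  rfl

lemma d_eq_Dm (b : Basis S k V) (d : TensorAlgebra k V →ₗ[k] TensorAlgebra k V)
    (hd : ∀ (m : ℕ) (f : Fin m → S),
      d ((List.ofFn fun i => TensorAlgebra.ι k (b (f i))).prod) =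
        ∑ j : Fin m, ((-1 : k) ^ (j : ℕ)) •
          (List.ofFn fun i : Fin (m + 1) =>
            TensorAlgebra.ι k (b (f (j.predAbove i)))).prod) :
    d = Dm b := by
  apply b.tensorAlgebra.ext
  intro l
  rw [bA_apply]
  have hl : (l.toList.map fun s => ι k (b s)).prod =
      mon b (fun i : Fin l.toList.length => l.toList.get i) := by
    conv_lhs => rw [← List.ofFn_get l.toList]
    rw [List.map_ofFn]
    rfl
  rw [hl, Dm_mon]
  exact hd _ _

end Stmt15Aux

/-- Let `V` have basis `S` over a field of characteristic zero, let `d` be the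
degree-one derivation of `T(V)` with `d(s) = s⊗s` (Koszul signs; on basis monomials
`d(s₁⋯sₘ) = Σ_j (−1)^{j−1} s₁⋯s_j s_j⋯sₘ`), and let `wₙ`, `w_{n+1}` be the
left-normed (graded) bracketing maps on pure tensors of length `n+1` and `n+2`.
Then there exists a linear map `g` such that `w_{n+1} ∘ g = d ∘ wₙ` on the
degree-`(n+1)` component `V^{⊗(n+1)}`. -/
theorem stmt15 (k : Type*) [Field k] [CharZero k] (V : Type*) [AddCommGroup V] [Module k V]
    (S : Type*) (b : Module.Basis S k V) (n : ℕ)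
    (d wn wn1 : TensorAlgebra k V →ₗ[k] TensorAlgebra k V)
    (hd : ∀ (m : ℕ) (f : Fin m → S),
      d ((List.ofFn fun i => TensorAlgebra.ι k (b (f i))).prod) =
        ∑ j : Fin m, ((-1 : k) ^ (j : ℕ)) •
          (List.ofFn fun i : Fin (m + 1) =>
            TensorAlgebra.ι k (b (f (j.predAbove i)))).prod)
    (hwn : ∀ v : Fin (n + 1) → V,
      wn ((List.ofFn fun i => TensorAlgebra.ι k (v i)).prod) = glnbF k V v)
    (hwn1 : ∀ v : Fin (n + 1 + 1) → V,
      wn1 ((List.ofFn fun i => TensorAlgebra.ι k (v i)).prod) = glnbF k V v) :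
    ∃ g : TensorAlgebra k V →ₗ[k] TensorAlgebra k V,
      ∀ x ∈ (LinearMap.range (TensorAlgebra.ι k (M := V)) ^ (n + 1) :
          Submodule k (TensorAlgebra k V)),
        wn1 (g x) = d (wn x) := by
  classical
  open Stmt15Aux in
  have hdD : d = Stmt15Aux.Dm b := Stmt15Aux.d_eq_Dm b d hd
  set g : TensorAlgebra k V →ₗ[k] TensorAlgebra k V :=
    (b.tensorAlgebra).constr k (fun l => if h : l.toList.length = n + 1 then
      ∑ j : Fin (n + 1), Stmt15Aux.cc k j •
        Stmt15Aux.mon b (fun i : Fin (n + 2) =>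
          l.toList.get (Fin.cast h.symm (j.predAbove i)))
    else 0) with hgdef
  refine ⟨g, ?_⟩
  -- the key computation on monomial generators
  have hkey : ∀ f : Fin (n + 1) → S,
      wn1 (g (Stmt15Aux.mon b f)) = d (wn (Stmt15Aux.mon b f)) := by
    intro f
    have hlen : (FreeMonoid.ofList (List.ofFn f)).toList.length = n + 1 := by
      simp [FreeMonoid.toList_ofList]
    have h1 : g (Stmt15Aux.mon b f) =
        ∑ j : Fin (n + 1), Stmt15Aux.cc k j •
          Stmt15Aux.mon b (fun i : Fin (n + 2) => f (j.predAbove i)) := by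
      rw [Stmt15Aux.mon_eq_tensorAlgebraBasis, hgdef, Module.Basis.constr_basis, dif_pos hlen]
      apply Finset.sum_congr rfl
      intro j _
      congr 1
      apply congrArg
      funext i
      exact (List.get_ofFn f (Fin.cast hlen.symm (j.predAbove i))).trans
        (congrArg f (by apply Fin.ext; rfl))
    rw [h1, map_sum]
    have h2 : ∀ j : Fin (n + 1),
        wn1 (Stmt15Aux.cc k j • Stmt15Aux.mon b (fun i : Fin (n + 2) => f (j.predAbove i))) =
          Stmt15Aux.cc k j • glnbF k V (fun i => b (f (j.predAbove i))) := by
      intro j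
      rw [map_smul]
      congr 1
      rw [Stmt15Aux.mon]
      exact hwn1 (fun i => b (f (j.predAbove i)))
    rw [Finset.sum_congr rfl (fun j _ => h2 j), ← Stmt15Aux.key b f, ← hdD]
    congr 1
    rw [show wn (Stmt15Aux.mon b f) = glnbF k V (fun i => b (f i)) by
      rw [Stmt15Aux.mon]; exact hwn (fun i => b (f i))]
  -- reduce membership in the power of the augmentation ideal to monomials
  intro x hx
  have hrange : LinearMap.range (TensorAlgebra.ι k (M := V)) =
      Submodule.span k (Set.range fun s => TensorAlgebra.ι k (b s)) := by
    rw [← Submodule.map_top, ← b.span_eq, Submodule.map_span, ← Set.range_comp]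
    rfl
  rw [hrange, Submodule.span_pow] at hx
  induction hx using Submodule.span_induction with
  | mem y hy =>
    rw [Set.mem_pow] at hy
    obtain ⟨F, hF⟩ := hy
    choose f hf using fun i => (F i).2
    have hy' : y = Stmt15Aux.mon b f := by
      rw [← hF, Stmt15Aux.mon,
        congrArg List.ofFn (funext fun i => (hf i).symm :
          (fun i => ((F i : TensorAlgebra k V))) = fun i => TensorAlgebra.ι k (b (f i)))]
    rw [hy']
    exact hkey f
  | zero => simp
  | add a c _ _ ha hc => simp [map_add, ha, hc]
  | smul r a _ ha => simp [map_smul, ha]
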